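/- Comparison of spatial decay factors (Lemma 'spatial-upper-and-lower'). Let s > 0 and set ρ_S = √(1 − 2/(√(1 + s) + 1)) and λ_S = s/(3 + 3s) if s < 48, and λ_S = max( s/(3 + 3s), (1 − 4√3 · s^{-1/2})² ) if s ≥ 48. Then ρ_S^{32} ≤ λ_S. -/

import Mathlib

set_option maxHeartbeats 1000000 in
/-- **Comparison of spatial decay factors (Lemma `spatial-upper-and-lower`).**
For `s > 0`, with `ρ_S = √(1 − 2/(√(1+s)+1))` and
`λ_S = s/(3+3s)` if `s < 48`, `λ_S = max(s/(3+3s), (1 − 4√3·s^{-1/2})²)` otherwise,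
we have `ρ_S^32 ≤ λ_S`. -/
theorem stmt16 (s : ℝ) (hs : 0 < s) :
    (Real.sqrt (1 - 2 / (Real.sqrt (1 + s) + 1))) ^ 32
      ≤ if s < 48 then s / (3 + 3 * s)
        else max (s / (3 + 3 * s)) ((1 - 4 * Real.sqrt 3 * s ^ (-(1 : ℝ) / 2)) ^ 2) := by
  set u := Real.sqrt (1 + s) with hu
  have hs1 : (0:ℝ) ≤ 1 + s := by linarith
  have hu2 : u ^ 2 = 1 + s := Real.sq_sqrt hs1
  have hu0 : 0 ≤ u := Real.sqrt_nonneg _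
  have hu1 : 1 < u := by nlinarith
  have hupos : (0:ℝ) < u + 1 := by linarith
  have harg : 0 ≤ 1 - 2 / (u + 1) := by
    have h : 2 / (u + 1) ≤ 1 := by rw [div_le_one hupos]; linarith
    linarith
  have hkey : 1 - 2 / (u + 1) = (u - 1) / (u + 1) := by field_simp; ring
  have hrho : (Real.sqrt (1 - 2 / (u + 1))) ^ 32 = ((u - 1) / (u + 1)) ^ 16 := by
    rw [show (32:ℕ) = 2 * 16 by rfl, pow_mul, Real.sq_sqrt harg, hkey]
  rw [hrho]
  -- Left branch lemma: valid for s ≤ 200 (i.e. u ≤ 15)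
  have hL : s ≤ 200 → ((u - 1) / (u + 1)) ^ 16 ≤ s / (3 + 3 * s) := by
    intro hs200
    have hu15 : u ≤ 15 := by nlinarith
    have hA : ((8:ℝ)/7 * (u - 1)) ^ 15 ≤ (u + 1) ^ 15 :=
      pow_le_pow_left₀ (by linarith) (by linarith) 15
    have hnn : (0:ℝ) ≤ (u - 1) ^ 15 := pow_nonneg (by linarith) 15
    have h2 : 3 * (u - 1) ^ 15 ≤ (u + 1) ^ 15 := by
      calc 3 * (u - 1) ^ 15 ≤ ((8:ℝ)/7) ^ 15 * (u - 1) ^ 15 := by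
            apply mul_le_mul_of_nonneg_right _ hnn
            norm_num
        _ = ((8:ℝ)/7 * (u - 1)) ^ 15 := (mul_pow _ _ _).symm
        _ ≤ (u + 1) ^ 15 := hA
    have h3 : u ^ 2 * (3 * (u - 1) ^ 15) ≤ (u + 1) ^ 2 * (u + 1) ^ 15 := by
      apply mul_le_mul (by nlinarith) h2 (by positivity) (by positivity)
    have key3 : 3 * u ^ 2 * (u - 1) ^ 15 ≤ (u + 1) ^ 17 := by nlinarith [h3]
    have hsrw : s / (3 + 3 * s) = (u - 1) * (u + 1) / (3 * u ^ 2) := by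
      rw [show (u - 1) * (u + 1) = s by nlinarith, show 3 * u ^ 2 = 3 + 3 * s by nlinarith]
    rw [hsrw, div_pow, div_le_div_iff₀ (by positivity) (by positivity)]
    have hmul : (u - 1) * (3 * u ^ 2 * (u - 1) ^ 15) ≤ (u - 1) * ((u + 1) ^ 17) :=
      mul_le_mul_of_nonneg_left key3 (by linarith)
    nlinarith [hmul]
  by_cases hc : s ≤ 200
  · have := hL hc
    split
    · exact this
    · exact le_trans this (le_max_left _ _)
  · -- Right branch: s > 200
    push_neg at hc
    rw [if_neg (by linarith)]
    refine le_trans ?_ (le_max_right _ _)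
    set w := Real.sqrt s with hw
    have hw2 : w ^ 2 = s := Real.sq_sqrt hs.le
    have hw0 : 0 ≤ w := Real.sqrt_nonneg _
    have hw14 : 14 ≤ w := by
      have h196 : Real.sqrt 196 ≤ Real.sqrt s := Real.sqrt_le_sqrt (by linarith)
      rwa [show (196:ℝ) = 14 ^ 2 by norm_num, Real.sqrt_sq (by norm_num : (0:ℝ) ≤ 14)] at h196
    set r := Real.sqrt 3 with hr
    have hr2 : r ^ 2 = 3 := Real.sq_sqrt (by norm_num)
    have hr0 : 0 ≤ r := Real.sqrt_nonneg _
    have hr74 : r ≤ 7/4 := by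
      have h49 : Real.sqrt 3 ≤ Real.sqrt ((7/4) ^ 2) := Real.sqrt_le_sqrt (by norm_num)
      rwa [Real.sqrt_sq (by norm_num : (0:ℝ) ≤ 7/4)] at h49
    have hwpos : (0:ℝ) < w := by linarith
    have hrpow : s ^ (-(1:ℝ)/2) = 1 / w := by
      rw [show (-(1:ℝ)/2) = -(1/2 : ℝ) by norm_num, Real.rpow_neg hs.le,
        ← Real.sqrt_eq_rpow, ← hw, one_div]
    rw [hrpow]
    -- reduce to showing ((u-1)/(u+1))^8 ≤ 1 - 4r/w
    have huw : u ≤ w + 1 := by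
      rw [hu]
      have : (1 + s) ≤ (w + 1) ^ 2 := by nlinarith
      calc Real.sqrt (1 + s) ≤ Real.sqrt ((w + 1) ^ 2) := Real.sqrt_le_sqrt this
        _ = w + 1 := by rw [Real.sqrt_sq (by linarith)]
    have hstep1 : (u - 1) / (u + 1) ≤ w / (w + 2) := by
      rw [div_le_div_iff₀ hupos (by linarith)]
      nlinarith
    have hfrac0 : 0 ≤ (u - 1) / (u + 1) := div_nonneg (by linarith) hupos.le
    have hx0 : 0 < 2 / (w + 2) := by positivity
    have hx8 : 2 / (w + 2) ≤ 1/8 := by rw [div_le_div_iff₀ (by linarith) (by norm_num)]; linarith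
    set x := 2 / (w + 2) with hxdef
    have hwx : w / (w + 2) = 1 - x := by rw [hxdef]; field_simp; ring
    have hpoly : (1 - x) ^ 8 ≤ 1 - 8 * x + 28 * x ^ 2 := by
      have h0 : 0 ≤ x := hx0.le
      have hb3 : x ^ 3 ≤ (1/8:ℝ) ^ 3 := pow_le_pow_left₀ h0 hx8 3
      have hb5 : x ^ 5 ≤ (1/8:ℝ) ^ 5 := pow_le_pow_left₀ h0 hx8 5
      have hsq : 0 ≤ x ^ 2 := sq_nonneg x
      have h4 : 0 ≤ x ^ 4 := by positivity
      have inner : 0 ≤ 56 - 70 * x + 56 * x ^ 2 - 28 * x ^ 3 + 8 * x ^ 4 - x ^ 5 := by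
        nlinarith
      have hid : 1 - 8 * x + 28 * x ^ 2 - (1 - x) ^ 8
          = x ^ 3 * (56 - 70 * x + 56 * x ^ 2 - 28 * x ^ 3 + 8 * x ^ 4 - x ^ 5) := by ring
      nlinarith [mul_nonneg (pow_nonneg h0 3) inner]
    have hquad : 1 - 8 * x + 28 * x ^ 2 ≤ 1 - 4 * r / w := by
      have hxval : x = 2 / (w + 2) := hxdef
      have h1 : 4 * r / w ≤ 7 / w := by gcongr; linarith
      have hwp2 : (0:ℝ) < (w + 2) ^ 2 := by positivity
      have h2 : 7 / w ≤ 8 * x - 28 * x ^ 2 := by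
        rw [hxval, show 8 * (2 / (w + 2)) - 28 * (2 / (w + 2)) ^ 2
            = (16 * (w + 2) - 112) / (w + 2) ^ 2 by field_simp; ring,
          div_le_div_iff₀ hwpos hwp2]
        nlinarith
      linarith
    have hfin8 : ((u - 1) / (u + 1)) ^ 8 ≤ 1 - 4 * r / w := by
      calc ((u - 1) / (u + 1)) ^ 8 ≤ (w / (w + 2)) ^ 8 :=
            pow_le_pow_left₀ hfrac0 hstep1 8
        _ = (1 - x) ^ 8 := by rw [hwx]
        _ ≤ 1 - 8 * x + 28 * x ^ 2 := hpoly
        _ ≤ 1 - 4 * r / w := hquad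
    have hrhs0 : 0 ≤ 1 - 4 * r / w := by
      have : 4 * r / w ≤ 7 / w := by gcongr; linarith
      have h7w : 7 / w ≤ 1 := by rw [div_le_one hwpos]; linarith
      linarith
    have hgoal : ((u - 1) / (u + 1)) ^ 16 ≤ (1 - 4 * r / w) ^ 2 := by
      calc ((u - 1) / (u + 1)) ^ 16 = (((u - 1) / (u + 1)) ^ 8) ^ 2 := by ring
        _ ≤ (1 - 4 * r / w) ^ 2 := pow_le_pow_left₀ (pow_nonneg hfrac0 8) hfin8 2
    calc ((u - 1) / (u + 1)) ^ 16 ≤ (1 - 4 * r / w) ^ 2 := hgoal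
      _ = (1 - 4 * r * (1 / w)) ^ 2 := by ring
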